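/- Let E_0 be the eventual-agreement equivalence relation on the Cantor space 2^ℕ. There is a Borel E_0-coloring c of dimension 2 by 2 colors such that there exists no Borel monochromatic reduction to E_1 for c. -/
import Mathlib


open Classical

noncomputable section

/-- `Y` is a complete section for `E`: it meets every `E`-class. -/
def IsCompleteSection {X : Type*} (E : X → X → Prop) (Y : Set X) : Prop :=
  ∀ x : X, ∃ y ∈ Y, E x y

/-- `Y` is an infinite complete section for `E`: it meets every `E`-class in an infinite set. -/
def IsInfiniteCompleteSection {X : Type*} (E : X → X → Prop) (Y : Set X) : Prop :=
  ∀ x : X, {y | y ∈ Y ∧ E x y}.Infinite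

/-- A coloring `c` of the `n`-element subsets of single `E`-classes (encoded as a function on
finsets) is `E`-monochromatic on `Y`: for every `x` there is a color `a` such that every
`n`-element subset of `Y` contained in `[x]_E` gets color `a`. -/
def IsMonochromatic {X : Type*} (E : X → X → Prop) (n : ℕ) {k : ℕ}
    (c : Finset X → Fin k) (Y : Set X) : Prop :=
  ∀ x : X, ∃ a : Fin k, ∀ A : Finset X, A.card = n → ↑A ⊆ Y → (∀ y ∈ A, E x y) → c A = a

/-- `c` is a Borel coloring of dimension `n`: the induced map on `n`-tuples is measurable. -/
def IsBorelColoring {X : Type*} [MeasurableSpace X] (n : ℕ) {k : ℕ}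
    (c : Finset X → Fin k) : Prop :=
  Measurable fun v : Fin n → X => c (Set.finite_range v).toFinset

/-- The strong Borel Ramsey property `E →_B (E)^n_k`: every Borel `E`-coloring of dimension
`n` by `k` colors admits a Borel `E`-monochromatic infinite complete section. -/
def StrongBorelRamsey {X : Type*} [MeasurableSpace X] (E : X → X → Prop) (n k : ℕ) : Prop :=
  ∀ c : Finset X → Fin k, IsBorelColoring n c →
    ∃ Y : Set X, MeasurableSet Y ∧ IsInfiniteCompleteSection E Y ∧ IsMonochromatic E n c Y

/-- The weak Borel Ramsey property `E →*_B (E)^n_k`: every Borel `E`-coloring of dimension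
`n` by `k` colors admits a Borel `E`-monochromatic complete section. -/
def WeakBorelRamsey {X : Type*} [MeasurableSpace X] (E : X → X → Prop) (n k : ℕ) : Prop :=
  ∀ c : Finset X → Fin k, IsBorelColoring n c →
    ∃ Y : Set X, MeasurableSet Y ∧ IsCompleteSection E Y ∧ IsMonochromatic E n c Y

/-- `E` is smooth: Borel reducible to equality on a standard Borel space. -/
def IsSmooth {X : Type*} [MeasurableSpace X] (E : X → X → Prop) : Prop :=
  ∃ (Z : Type) (mZ : MeasurableSpace Z), @StandardBorelSpace Z mZ ∧
    ∃ f : X → Z, @Measurable X Z _ mZ f ∧ ∀ x y : X, E x y ↔ f x = f y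

/-- The eventual agreement relation `E₀` on Cantor space `2^ℕ`. -/
def E0 (x y : ℕ → Bool) : Prop := ∃ n : ℕ, ∀ m ≥ n, x m = y m

/-- `Σ_{i<δ(x,y)} x i + Σ_{i<δ(x,y)} y i`, where `δ(x,y)` is the least `n` with
`x m = y m` for all `m ≥ n`; junk value `0` if `x` and `y` are not `E₀`-related. -/
def colorSum (x y : ℕ → Bool) : ℕ :=
  if h : ∃ n : ℕ, ∀ m ≥ n, x m = y m then
    ((Finset.range (Nat.find h)).sum fun i => (x i).toNat) +
    ((Finset.range (Nat.find h)).sum fun i => (y i).toNat)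
  else 0

/-- The coloring `c` of the paper: a pair `{x,y}` of distinct `E₀`-related points gets color
`0` (representing color `1`) if `colorSum x y` is even, and color `1` (representing color `2`)
otherwise. -/
def c0 : Finset (ℕ → Bool) → Fin 2 := fun A =>
  if ∃ x y : ℕ → Bool, x ≠ y ∧ A = {x, y} ∧ E0 x y ∧ Even (colorSum x y) then 0 else 1

/-- The subrelation `F` of `E₀`: `x F y` iff `x = y` or `c ({x,y}) = 1` (even `colorSum`). -/
def F0 (x y : ℕ → Bool) : Prop := x = y ∨ (E0 x y ∧ Even (colorSum x y))

/-- The map flipping coordinate `0`. -/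
def flip0 (x : ℕ → Bool) : ℕ → Bool := fun n => if n = 0 then !(x 0) else x n

/-- Eventual agreement of `X`-valued sequences: the relation `E₀(X)` on `X^ℕ`
(denoted `E₁` when `X` is uncountable). -/
def E1rel {X : Type*} (u v : ℕ → X) : Prop := ∃ N : ℕ, ∀ j ≥ N, u j = v j

/-- `S` is a monochromatic reduction to `E₁` for the coloring `c` of dimension `n`:
each `S x` is injective, its range is a monochromatic subset of `[x]_E`, and
`x E y ↔ S x E₁ S y`. -/
def IsMonochromaticReduction {X : Type*} (E : X → X → Prop) (n : ℕ) {k : ℕ}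
    (c : Finset X → Fin k) (S : X → ℕ → X) : Prop :=
  (∀ x : X, Function.Injective (S x)) ∧
  (∀ x : X, (∀ i : ℕ, E x (S x i)) ∧
    ∃ a : Fin k, ∀ A : Finset X, A.card = n → ↑A ⊆ Set.range (S x) → c A = a) ∧
  (∀ x y : X, E x y ↔ E1rel (S x) (S y))

/-- `c` is an almost transitive coloring of dimension `n` for `E`: for every `m ≥ n`, every
`A ∈ [X]^m_E` and all `(n-1)`-element subsets `B₁, B₂ ⊆ A`, one has
`c ({z} ∪ B₁) = c ({z} ∪ B₂)` for all but finitely many `z` in the `E`-saturation of `A`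
outside `B₁ ∪ B₂`. -/
def AlmostTransitive {X : Type*} (E : X → X → Prop) (n : ℕ) {k : ℕ}
    (c : Finset X → Fin k) : Prop :=
  ∀ m : ℕ, n ≤ m → ∀ A : Finset X, A.card = m → (∀ x ∈ A, ∀ y ∈ A, E x y) →
    ∀ B₁ B₂ : Finset X, B₁ ⊆ A → B₂ ⊆ A → B₁.card = n - 1 → B₂.card = n - 1 →
      {z : X | (∃ a ∈ A, E a z) ∧ z ∉ B₁ ∪ B₂ ∧ c (insert z B₁) ≠ c (insert z B₂)}.Finite
section Aux
def csum (n : ℕ) (x : ℕ → Bool) : ℕ := (Finset.range n).sum fun i => (x i).toNat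

lemma E0.symm {x y : ℕ → Bool} (h : E0 x y) : E0 y x := by
  obtain ⟨n, hn⟩ := h; exact ⟨n, fun m hm => (hn m hm).symm⟩

lemma E0.trans {x y z : ℕ → Bool} (h : E0 x y) (h' : E0 y z) : E0 x z := by
  obtain ⟨n, hn⟩ := h; obtain ⟨n', hn'⟩ := h'
  exact ⟨max n n', fun m hm => (hn m (le_trans (le_max_left _ _) hm)).trans
    (hn' m (le_trans (le_max_right _ _) hm))⟩

lemma colorSum_symm (x y : ℕ → Bool) : colorSum x y = colorSum y x := by
  unfold colorSum
  by_cases h : ∃ n : ℕ, ∀ m ≥ n, x m = y m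
  · have h' : ∃ n : ℕ, ∀ m ≥ n, y m = x m := by
      obtain ⟨n, hn⟩ := h; exact ⟨n, fun m hm => (hn m hm).symm⟩
    rw [dif_pos h, dif_pos h']
    have : Nat.find h = Nat.find h' := by
      apply le_antisymm
      · exact Nat.find_min' h (fun m hm => (Nat.find_spec h' m hm).symm)
      · exact Nat.find_min' h' (fun m hm => (Nat.find_spec h m hm).symm)
    rw [this, Nat.add_comm]
  · have h' : ¬ ∃ n : ℕ, ∀ m ≥ n, y m = x m := by
      intro ⟨n, hn⟩; exact h ⟨n, fun m hm => (hn m hm).symm⟩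
    rw [dif_neg h, dif_neg h']

lemma colorSum_even_iff {x y : ℕ → Bool} {n : ℕ} (hn : ∀ m ≥ n, x m = y m) :
    (Even (colorSum x y) ↔ Even (csum n x + csum n y)) := by
  have h : ∃ N : ℕ, ∀ m ≥ N, x m = y m := ⟨n, hn⟩
  have hfind : Nat.find h ≤ n := Nat.find_min' h hn
  rw [colorSum, dif_pos h]
  have hx : csum (Nat.find h) x + (Finset.Ico (Nat.find h) n).sum
      (fun i => (x i).toNat) = csum n x := by
    simp only [csum, Finset.range_eq_Ico]
    exact Finset.sum_Ico_consecutive _ (Nat.zero_le _) hfind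
  have hy : csum (Nat.find h) y + (Finset.Ico (Nat.find h) n).sum
      (fun i => (y i).toNat) = csum n y := by
    simp only [csum, Finset.range_eq_Ico]
    exact Finset.sum_Ico_consecutive _ (Nat.zero_le _) hfind
  have hxy : (Finset.Ico (Nat.find h) n).sum (fun i => (x i).toNat)
      = (Finset.Ico (Nat.find h) n).sum (fun i => (y i).toNat) := by
    apply Finset.sum_congr rfl
    intro i hi
    rw [Nat.find_spec h i (Finset.mem_Ico.mp hi).1]
  change Even (csum (Nat.find h) x + csum (Nat.find h) y) ↔ _
  rw [Nat.even_iff, Nat.even_iff, ← hx, ← hy, hxy]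
  omega

def flipAt (n : ℕ) (x : ℕ → Bool) : ℕ → Bool := Function.update x n (!x n)

lemma flipAt_apply_ne {n m : ℕ} (x : ℕ → Bool) (h : m ≠ n) : flipAt n x m = x m :=
  Function.update_of_ne h _ _

lemma flipAt_apply_self (n : ℕ) (x : ℕ → Bool) : flipAt n x n = !x n :=
  Function.update_self _ _ _

lemma flipAt_agree (n : ℕ) (x : ℕ → Bool) : ∀ m ≥ n + 1, x m = flipAt n x m := by
  intro m hm
  rw [flipAt_apply_ne x (by omega)]

lemma csum_flipAt_odd {n N : ℕ} (hnN : n < N) (x : ℕ → Bool) :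
    ¬ Even (csum N x + csum N (flipAt n x)) := by
  have hmem : n ∈ Finset.range N := Finset.mem_range.mpr hnN
  have hsum : csum N x + csum N (flipAt n x)
      = (Finset.range N).sum (fun i => (x i).toNat + ((flipAt n x) i).toNat) := by
    rw [csum, csum, Finset.sum_add_distrib]
  rw [hsum, ← Finset.sum_erase_add _ _ hmem]
  have h1 : (x n).toNat + ((flipAt n x) n).toNat = 1 := by
    rw [flipAt_apply_self]; cases x n <;> rfl
  have h2 : Even (((Finset.range N).erase n).sum
      (fun i => (x i).toNat + ((flipAt n x) i).toNat)) := by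
    apply Finset.even_sum
    intro i hi
    rw [flipAt_apply_ne x (Finset.ne_of_mem_erase hi)]
    exact Even.add_self _
  rw [Nat.even_iff] at h2 ⊢
  omega

lemma pair_cases {α : Type*} [DecidableEq α] {x y a b : α} (hxy : x ≠ y)
    (h : ({x, y} : Finset α) = {a, b}) : (a = x ∧ b = y) ∨ (a = y ∧ b = x) := by
  have ha : a = x ∨ a = y := by
    have : a ∈ ({x, y} : Finset α) := by rw [h]; simp
    simpa using this
  have hb : b = x ∨ b = y := by
    have : b ∈ ({x, y} : Finset α) := by rw [h]; simp
    simpa using this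
  have hx : x = a ∨ x = b := by
    have : x ∈ ({a, b} : Finset α) := by rw [← h]; simp
    simpa using this
  have hy : y = a ∨ y = b := by
    have : y ∈ ({a, b} : Finset α) := by rw [← h]; simp
    simpa using this
  rcases ha with rfl | rfl
  · left; constructor; rfl
    rcases hy with rfl | rfl
    · exact absurd rfl hxy
    · rfl
  · right; constructor; rfl
    rcases hx with rfl | rfl
    · exact absurd rfl hxy
    · rfl

lemma c0_pair {x y : ℕ → Bool} (hxy : x ≠ y) :
    c0 {x, y} = if E0 x y ∧ Even (colorSum x y) then 0 else 1 := by
  unfold c0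
  congr 1
  simp only [eq_iff_iff]
  constructor
  · rintro ⟨a, b, hab, hpair, hE, hEv⟩
    rcases pair_cases hxy hpair with ⟨rfl, rfl⟩ | ⟨rfl, rfl⟩
    · exact ⟨hE, hEv⟩
    · exact ⟨E0.symm hE, by rwa [colorSum_symm]⟩
  · rintro ⟨hE, hEv⟩
    exact ⟨x, y, hxy, rfl, hE, hEv⟩

lemma c0_single (x : ℕ → Bool) : c0 {x} = 1 := by
  unfold c0
  rw [if_neg]
  rintro ⟨a, b, hab, hpair, -⟩
  have h2 : ({a, b} : Finset (ℕ → Bool)).card = 2 := Finset.card_pair hab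
  rw [← hpair, Finset.card_singleton] at h2
  omega

lemma c0_pair_eq_zero {x y : ℕ → Bool} (hxy : x ≠ y) (hE : E0 x y)
    (h : c0 {x, y} = 0) : Even (colorSum x y) := by
  rw [c0_pair hxy] at h
  by_contra hEv
  rw [if_neg (by tauto)] at h
  exact absurd h (by decide)

lemma c0_pair_eq_one {x y : ℕ → Bool} (hxy : x ≠ y) (hE : E0 x y)
    (h : c0 {x, y} = 1) : ¬ Even (colorSum x y) := by
  intro hEv
  rw [c0_pair hxy, if_pos ⟨hE, hEv⟩] at h
  exact absurd h (by decide)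

lemma range_toFinset (v : Fin 2 → (ℕ → Bool)) :
    (Set.finite_range v).toFinset = {v 0, v 1} := by
  ext a
  simp [Set.Finite.mem_toFinset, Set.mem_range, Fin.exists_fin_two, eq_comm]

abbrev Ca := ℕ → Bool

/-- agreement sets -/
def Qset (n : ℕ) : Set (Ca × Ca) := {p | ∀ m ≥ n, p.1 m = p.2 m}

lemma measurable_coord_eq (m : ℕ) : MeasurableSet {p : Ca × Ca | p.1 m = p.2 m} := by
  have : {p : Ca × Ca | p.1 m = p.2 m} =
      ⋃ b : Bool, ((fun p : Ca × Ca => p.1 m) ⁻¹' {b}) ∩ ((fun p : Ca × Ca => p.2 m) ⁻¹' {b}) := by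
    ext p; simp only [Set.mem_setOf_eq, Set.mem_iUnion, Set.mem_inter_iff, Set.mem_preimage,
      Set.mem_singleton_iff]
    constructor
    · intro h; exact ⟨p.2 m, h, rfl⟩
    · rintro ⟨b, h1, h2⟩; rw [h1, h2]
  rw [this]
  apply MeasurableSet.iUnion
  intro b
  exact (((measurable_pi_apply m).comp measurable_fst) (MeasurableSet.singleton b)).inter
    (((measurable_pi_apply m).comp measurable_snd) (MeasurableSet.singleton b))

lemma Qset_measurable (n : ℕ) : MeasurableSet (Qset n) := by
  have : Qset n = ⋂ m, ⋂ (_ : m ≥ n), {p : Ca × Ca | p.1 m = p.2 m} := by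
    ext p; simp [Qset]
  rw [this]
  exact MeasurableSet.iInter fun m => MeasurableSet.iInter fun _ => measurable_coord_eq m

lemma measurable_csum_pair (n : ℕ) :
    Measurable (fun p : Ca × Ca => csum n p.1 + csum n p.2) := by
  apply Measurable.add
  · apply Finset.measurable_sum
    intro i _
    exact (Measurable.of_discrete (f := Bool.toNat)).comp
      ((measurable_pi_apply i).comp measurable_fst)
  · apply Finset.measurable_sum
    intro i _
    exact (Measurable.of_discrete (f := Bool.toNat)).comp
      ((measurable_pi_apply i).comp measurable_snd)

lemma measurable_colorSum : Measurable (fun p : Ca × Ca => colorSum p.1 p.2) := by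
  apply measurable_to_countable'
  intro k
  have hset : (fun p : Ca × Ca => colorSum p.1 p.2) ⁻¹' {k} =
      ((⋃ n, Qset n)ᶜ ∩ (if k = 0 then Set.univ else ∅)) ∪
      ⋃ n, (Qset n ∩ (⋂ m < n, (Qset m)ᶜ) ∩
        {p : Ca × Ca | csum n p.1 + csum n p.2 = k}) := by
    ext p
    simp only [Set.mem_preimage, Set.mem_singleton_iff, Set.mem_union, Set.mem_inter_iff,
      Set.mem_compl_iff, Set.mem_iUnion, Set.mem_iInter, Set.mem_setOf_eq]
    by_cases h : ∃ n : ℕ, ∀ m ≥ n, p.1 m = p.2 m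
    · have hcs : colorSum p.1 p.2 = csum (Nat.find h) p.1 + csum (Nat.find h) p.2 := by
        rw [colorSum, dif_pos h]; rfl
      have hQfind : p ∈ Qset (Nat.find h) := Nat.find_spec h
      constructor
      · intro hk
        right
        exact ⟨Nat.find h, ⟨hQfind, fun m hm hQ => Nat.find_min h hm hQ⟩,
          by rw [← hcs]; exact hk⟩
      · rintro (⟨hc, -⟩ | ⟨n, ⟨hQn, hmin⟩, hsum⟩)
        · have hall : ∀ n, p ∉ Qset n := by simpa using hc
          exact absurd hQfind (hall _)
        · have heq : Nat.find h = n := by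
            apply le_antisymm (Nat.find_min' h hQn)
            by_contra hlt
            exact hmin _ (by omega) hQfind
          rw [hcs, heq]; exact hsum
    · have hcs : colorSum p.1 p.2 = 0 := by rw [colorSum, dif_neg h]
      have hnotQ : ∀ n, ¬ (p ∈ Qset n) := fun n hn => h ⟨n, hn⟩
      constructor
      · intro hk
        left
        refine ⟨fun hc => ?_, ?_⟩
        · obtain ⟨n, hn⟩ := by simpa using hc
          exact hnotQ n hn
        · rw [if_pos (by omega : k = 0)]; trivial
      · rintro (⟨-, hk⟩ | ⟨n, ⟨hQn, -⟩, -⟩)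
        · by_cases hk0 : k = 0
          · omega
          · rw [if_neg hk0] at hk; exact absurd hk (Set.notMem_empty _)
        · exact absurd hQn (hnotQ n)
  rw [hset]
  apply MeasurableSet.union
  · apply MeasurableSet.inter
    · exact (MeasurableSet.iUnion fun n => Qset_measurable n).compl
    · split <;> simp
  · apply MeasurableSet.iUnion
    intro n
    exact ((Qset_measurable n).inter
      (MeasurableSet.iInter fun m => MeasurableSet.iInter fun _ => (Qset_measurable m).compl)).inter
      ((measurable_csum_pair n) (MeasurableSet.singleton k))

lemma measurable_E0set : MeasurableSet {p : Ca × Ca | E0 p.1 p.2} := by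
  have : {p : Ca × Ca | E0 p.1 p.2} = ⋃ n, Qset n := by
    ext p; simp [E0, Qset]
  rw [this]
  exact MeasurableSet.iUnion fun n => Qset_measurable n

lemma measurable_ne : MeasurableSet {p : Ca × Ca | p.1 ≠ p.2} := by
  have : {p : Ca × Ca | p.1 ≠ p.2} = (⋂ m, {p : Ca × Ca | p.1 m = p.2 m})ᶜ := by
    ext p
    simp only [Set.mem_setOf_eq, Set.mem_compl_iff, Set.mem_iInter, ne_eq]
    constructor
    · intro h hc; exact h (funext hc)
    · intro h hc; exact h fun m => by rw [hc]
  rw [this]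
  exact (MeasurableSet.iInter fun m => measurable_coord_eq m).compl

lemma flipAt_involutive (n : ℕ) : Function.Involutive (flipAt n) := by
  intro x
  funext m
  by_cases h : m = n
  · subst h
    rw [flipAt_apply_self, flipAt_apply_self, Bool.not_not]
  · rw [flipAt_apply_ne _ h, flipAt_apply_ne _ h]

lemma flipAt_continuous (n : ℕ) : Continuous (flipAt n) := by
  apply continuous_pi
  intro m
  by_cases h : m = n
  · subst h
    have : (fun x : Ca => flipAt m x m) = (fun b : Bool => !b) ∘ (fun x : Ca => x m) := by
      funext x; exact flipAt_apply_self m x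
    rw [this]
    exact Continuous.comp (continuous_of_discreteTopology) (continuous_apply m)
  · have : (fun x : Ca => flipAt n x m) = fun x : Ca => x m := by
      funext x; exact flipAt_apply_ne x h
    rw [this]
    exact continuous_apply m

def flipHomeo (n : ℕ) : Ca ≃ₜ Ca :=
  { toEquiv := (flipAt_involutive n).toPerm _
    continuous_toFun := flipAt_continuous n
    continuous_invFun := flipAt_continuous n }

lemma flipHomeo_coe (n : ℕ) : ⇑(flipHomeo n) = flipAt n := rfl

lemma isOpenMap_flipAt (n : ℕ) : IsOpenMap (flipAt n) := (flipHomeo n).isOpenMap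

lemma no_flip_function :
    ¬ ∃ φ : Ca → Bool, Measurable φ ∧ ∀ (n : ℕ) (x : Ca), φ (flipAt n x) = !(φ x) := by
  rintro ⟨φ, hφ, hflip⟩
  set A : Set Ca := φ ⁻¹' {true} with hA_def
  have hA : MeasurableSet A := hφ (MeasurableSet.singleton true)
  have hpre : ∀ n, flipAt n ⁻¹' A = Aᶜ := by
    intro n
    ext x
    simp only [hA_def, Set.mem_preimage, Set.mem_singleton_iff, Set.mem_compl_iff, hflip,
      Bool.not_eq_true']
    exact ⟨fun h => by simp [h], fun h => by simpa using h⟩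
  have hpreC : ∀ n, flipAt n ⁻¹' Aᶜ = A := by
    intro n
    ext y
    simp only [Set.mem_preimage, Set.mem_compl_iff, hA_def, Set.mem_singleton_iff, hflip]
    cases φ y <;> simp
  obtain ⟨U, hU, hAU⟩ := hA.baireMeasurableSet.residualEq_isOpen
  have hres : {x | x ∈ A ↔ x ∈ U} ∈ residual Ca := by
    have := hAU
    rw [Filter.eventuallyEq_set] at this
    exact this
  have hUA : IsMeagre (U \ A) := by
    rw [IsMeagre]
    apply Filter.mem_of_superset hres
    intro x hx
    simp only [Set.mem_compl_iff, Set.mem_diff, not_and, not_not]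
    intro hxU
    exact (Set.mem_setOf_eq ▸ hx).mpr hxU
  have hAUm : IsMeagre (A \ U) := by
    rw [IsMeagre]
    apply Filter.mem_of_superset hres
    intro x hx
    simp only [Set.mem_compl_iff, Set.mem_diff, not_and, not_not]
    intro hxA
    exact (Set.mem_setOf_eq ▸ hx).mp hxA
  rcases Set.eq_empty_or_nonempty U with hUe | ⟨x, hxU⟩
  · -- A is meagre, hence so is Aᶜ, hence univ is meagre: contradiction
    have hAm : IsMeagre A := by
      have : A \ U = A := by rw [hUe]; simp
      rwa [this] at hAUm
    have hAcm : IsMeagre Aᶜ := by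
      rw [← hpre 0]
      exact hAm.preimage_of_isOpenMap (flipAt_continuous 0) (isOpenMap_flipAt 0)
    have huniv : IsMeagre (Set.univ : Set Ca) := by
      rw [← Set.union_compl_self A, IsMeagre, Set.compl_union]
      exact Filter.inter_mem hAm hAcm
    have : Dense ((Set.univ : Set Ca)ᶜ) := dense_of_mem_residual huniv
    rw [Set.compl_univ] at this
    obtain ⟨y, hy⟩ := this.nonempty
    exact hy
  · -- U nonempty: find a cylinder inside U and flip a coordinate outside its support
    obtain ⟨I, u, hu, hIu⟩ := isOpen_pi_iff.mp hU x hxU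
    set C : Set Ca := {y | ∀ i ∈ I, y i = x i} with hC_def
    have hCU : C ⊆ U := by
      intro y hy
      apply hIu
      intro i hi
      rw [hy i hi]
      exact (hu i hi).2
    have hCopen : IsOpen C := by
      have : C = Set.pi (↑I) (fun i => {x i}) := by
        ext y; simp [hC_def, Set.pi]
      rw [this]
      exact isOpen_set_pi I.finite_toSet (fun i _ => isOpen_discrete _)
    set n : ℕ := (I.sup id) + 1 with hn_def
    have hnI : n ∉ I := by
      intro hn
      have := Finset.le_sup (f := id) hn
      simp only [id] at this
      omega
    have hCpre : flipAt n ⁻¹' C = C := by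
      ext y
      simp only [Set.mem_preimage, hC_def, Set.mem_setOf_eq]
      constructor
      · intro h i hi
        have := h i hi
        rwa [flipAt_apply_ne y (fun he : i = n => hnI (he ▸ hi))] at this
      · intro h i hi
        rw [flipAt_apply_ne y (fun he : i = n => hnI (he ▸ hi))]
        exact h i hi
    have hCdA : IsMeagre (C \ A) := hUA.mono (Set.diff_subset_diff_left hCU)
    have hCiA : IsMeagre (C ∩ A) := by
      have : C ∩ A = flipAt n ⁻¹' (C \ A) := by
        rw [Set.diff_eq, Set.preimage_inter, hCpre, hpreC]
      rw [this]
      exact hCdA.preimage_of_isOpenMap (flipAt_continuous n) (isOpenMap_flipAt n)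
    have hCm : IsMeagre C := by
      have : C = (C \ A) ∪ (C ∩ A) := by
        ext y; by_cases hy : y ∈ A <;> simp [hy]
      rw [this, IsMeagre, Set.compl_union]
      exact Filter.inter_mem hCdA hCiA
    have hdense : Dense Cᶜ := dense_of_mem_residual hCm
    obtain ⟨y, hy1, hy2⟩ := hdense.inter_open_nonempty C hCopen ⟨x, fun i _ => rfl⟩
    exact hy2 hy1

end Aux

/-- There is a Borel `E₀`-coloring of dimension `2` by `2` colors admitting no Borel
monochromatic reduction to `E₁`. -/
theorem no_monochromatic_reduction_to_E1 :
    ∃ c : Finset (ℕ → Bool) → Fin 2, IsBorelColoring 2 c ∧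
      ¬ ∃ S : (ℕ → Bool) → ℕ → (ℕ → Bool), Measurable S ∧
        IsMonochromaticReduction E0 2 c S := by
  refine ⟨c0, ?_, ?_⟩
  · -- c0 is a Borel coloring
    show Measurable fun v : Fin 2 → Ca => c0 (Set.finite_range v).toFinset
    have hcompute : (fun v : Fin 2 → Ca => c0 (Set.finite_range v).toFinset)
        = fun v => if v 0 ≠ v 1 ∧ E0 (v 0) (v 1) ∧ Even (colorSum (v 0) (v 1))
            then 0 else 1 := by
      funext v
      rw [range_toFinset]
      by_cases h01 : v 0 = v 1
      · rw [if_neg (by tauto), h01]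
        have : ({v 1, v 1} : Finset Ca) = {v 1} := by simp
        rw [this, c0_single]
      · rw [c0_pair h01]
        by_cases h2 : E0 (v 0) (v 1) ∧ Even (colorSum (v 0) (v 1))
        · rw [if_pos h2, if_pos ⟨h01, h2.1, h2.2⟩]
        · rw [if_neg h2, if_neg (by tauto)]
    rw [hcompute]
    apply Measurable.ite _ measurable_const measurable_const
    have hset : {v : Fin 2 → Ca | v 0 ≠ v 1 ∧ E0 (v 0) (v 1) ∧ Even (colorSum (v 0) (v 1))}
        = (fun v : Fin 2 → Ca => (v 0, v 1)) ⁻¹'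
          (({p : Ca × Ca | p.1 ≠ p.2} ∩ {p : Ca × Ca | E0 p.1 p.2}) ∩
            ((fun p : Ca × Ca => colorSum p.1 p.2) ⁻¹' {k : ℕ | Even k})) := by
      ext v
      simp only [Set.mem_setOf_eq, Set.mem_preimage, Set.mem_inter_iff]
      tauto
    have hpairmap : Measurable (fun v : Fin 2 → Ca => (v 0, v 1)) :=
      (measurable_pi_apply 0).prodMk (measurable_pi_apply 1)
    rw [hset]
    exact hpairmap ((measurable_ne.inter measurable_E0set).inter
      (measurable_colorSum MeasurableSet.of_discrete))
  · rintro ⟨S, hS, hinj, hmono, hred⟩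
    have hE : ∀ (x : Ca) (i : ℕ), E0 x (S x i) := fun x => (hmono x).1
    have hpairE : ∀ (x : Ca) (i j : ℕ), E0 (S x i) (S x j) :=
      fun x i j => (hE x i).symm.trans (hE x j)
    have hEven : ∀ (x : Ca) (i j : ℕ), i ≠ j → Even (colorSum (S x i) (S x j)) := by
      intro x i j hij
      obtain ⟨a, ha⟩ := (hmono x).2
      have hcol : ∀ i j : ℕ, i ≠ j → c0 {S x i, S x j} = a := by
        intro i j hij
        apply ha
        · exact Finset.card_pair ((hinj x).ne hij)
        · intro z hz
          simp only [Finset.coe_insert, Finset.coe_singleton, Set.mem_insert_iff,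
            Set.mem_singleton_iff] at hz
          rcases hz with rfl | rfl
          · exact ⟨i, rfl⟩
          · exact ⟨j, rfl⟩
      have ha0 : a = 0 := by
        by_contra ha1
        have ha1 : a = 1 := by
          rcases (by omega : (a : Fin 2).val = 0 ∨ (a : Fin 2).val = 1) with h | h
          · exact absurd (Fin.ext h) ha1
          · exact Fin.ext h
        have o01 := c0_pair_eq_one ((hinj x).ne (by omega)) (hpairE x 0 1)
          (ha1 ▸ hcol 0 1 (by omega))
        have o12 := c0_pair_eq_one ((hinj x).ne (by omega)) (hpairE x 1 2)
          (ha1 ▸ hcol 1 2 (by omega))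
        have o02 := c0_pair_eq_one ((hinj x).ne (by omega)) (hpairE x 0 2)
          (ha1 ▸ hcol 0 2 (by omega))
        obtain ⟨m01, hm01⟩ := hpairE x 0 1
        obtain ⟨m12, hm12⟩ := hpairE x 1 2
        obtain ⟨m02, hm02⟩ := hpairE x 0 2
        set N := max m01 (max m12 m02) with hN
        rw [colorSum_even_iff (n := N) (fun m hm => hm01 m (by omega))] at o01
        rw [colorSum_even_iff (n := N) (fun m hm => hm12 m (by omega))] at o12
        rw [colorSum_even_iff (n := N) (fun m hm => hm02 m (by omega))] at o02
        rw [Nat.even_iff] at o01 o12 o02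
        omega
      exact c0_pair_eq_zero ((hinj x).ne hij) (hpairE x i j) (ha0 ▸ hcol i j hij)
    set φ : Ca → Bool := fun x => decide (Even (colorSum x (S x 0))) with hφ_def
    have hφmeas : Measurable φ := by
      have h1 : Measurable (fun x : Ca => (x, S x 0)) :=
        measurable_id.prodMk ((measurable_pi_apply 0).comp hS)
      have h2 : Measurable (fun x : Ca => colorSum x (S x 0)) := measurable_colorSum.comp h1
      exact (Measurable.of_discrete (f := fun k : ℕ => decide (Even k))).comp h2
    have hφflip : ∀ (n : ℕ) (x : Ca), φ (flipAt n x) = !(φ x) := by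
      intro n x
      set y := flipAt n x with hy
      obtain ⟨N1, hN1⟩ := hE x 0
      obtain ⟨N2, hN2⟩ := hE y 0
      obtain ⟨J0, hJ0⟩ := (hred x y).mp ⟨n + 1, flipAt_agree n x⟩
      set J := J0 + 1 with hJ
      have hSJ : S x J = S y J := hJ0 J (by omega)
      have hx0J : Even (colorSum (S x 0) (S x J)) := hEven x 0 J (by omega)
      have hy0J : Even (colorSum (S y 0) (S y J)) := hEven y 0 J (by omega)
      obtain ⟨N3, hN3⟩ := hpairE x 0 J
      obtain ⟨N4, hN4⟩ := hpairE y 0 J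
      set N := max (max N1 N2) (max (max N3 N4) (n + 1)) with hN
      have e1 : Even (colorSum x (S x 0)) ↔ Even (csum N x + csum N (S x 0)) :=
        colorSum_even_iff (fun m hm => hN1 m (by omega))
      have e2 : Even (colorSum y (S y 0)) ↔ Even (csum N y + csum N (S y 0)) :=
        colorSum_even_iff (fun m hm => hN2 m (by omega))
      have e3 : Even (csum N (S x 0) + csum N (S x J)) :=
        (colorSum_even_iff (fun m hm => hN3 m (by omega))).mp hx0J
      have e4 : Even (csum N (S y 0) + csum N (S y J)) :=
        (colorSum_even_iff (fun m hm => hN4 m (by omega))).mp hy0J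
      have e5 : ¬ Even (csum N x + csum N y) := by
        rw [hy]; exact csum_flipAt_odd (by omega) x
      rw [← hSJ] at e4
      have key : Even (colorSum y (S y 0)) ↔ ¬ Even (colorSum x (S x 0)) := by
        rw [e1, e2]
        simp only [Nat.even_iff] at e3 e4 e5 ⊢
        omega
      calc φ y = decide (Even (colorSum y (S y 0))) := rfl
        _ = decide (¬ Even (colorSum x (S x 0))) := by rw [decide_eq_decide]; exact key
        _ = !decide (Even (colorSum x (S x 0))) := by rw [decide_not]
        _ = !(φ x) := rfl
    exact no_flip_function ⟨φ, hφmeas, hφflip⟩
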